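/- Let Φ be an n×d real matrix and let s₁, s₂ be disjoint index sets with |s₁| = k₁, |s₂| = k₂. If the RIP constant δ_{k₁+k₂} ≤ 1/2, then the matrix M = Φ_{s₁}ᵀ (I − P{Φ_{s₂}}) Φ_{s₁} is invertible and M^{-1} ⪰ (1/(1+δ_{k₁})) I_{k₁} (i.e., M^{-1} − (1/(1+δ_{k₁}))I is positive semidefinite). -/

import Mathlib

open Matrix Finset

noncomputable section

/-- Number of nonzero entries of a vector. -/
def sparsity {d : ℕ} (x : Fin d → ℝ) : ℕ :=
  (Finset.univ.filter fun i => x i ≠ 0).card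

/-- Squared Euclidean norm. -/
def nsq {k : Type*} [Fintype k] (v : k → ℝ) : ℝ := ∑ i, v i ^ 2

/-- Euclidean (ℓ₂) norm. -/
def l2 {k : Type*} [Fintype k] (v : k → ℝ) : ℝ := Real.sqrt (nsq v)

/-- `Φ` satisfies the order-`t` restricted isometry property with constant `δ`. -/
def satRIP {n d : ℕ} (Φ : Matrix (Fin n) (Fin d) ℝ) (t : ℕ) (δ : ℝ) : Prop :=
  ∀ x : Fin d → ℝ, sparsity x ≤ t →
    (1 - δ) * nsq x ≤ nsq (Φ.mulVec x) ∧ nsq (Φ.mulVec x) ≤ (1 + δ) * nsq x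

/-- The order-`t` RIP constant of `Φ` : the smallest `δ ≥ 0` satisfying the RIP bounds. -/
def ripConst {n d : ℕ} (Φ : Matrix (Fin n) (Fin d) ℝ) (t : ℕ) : ℝ :=
  sInf {δ : ℝ | 0 ≤ δ ∧ satRIP Φ t δ}

/-- The submatrix of `Φ` consisting of the columns indexed by `s`. -/
def cols {n d : ℕ} (Φ : Matrix (Fin n) (Fin d) ℝ) (s : Finset (Fin d)) :
    Matrix (Fin n) {i // i ∈ s} ℝ := Φ.submatrix id (fun i => (i : Fin d))

/-- Orthogonal projection `P{Φ_s} = Φ_s (Φ_sᵀ Φ_s)⁻¹ Φ_sᵀ` onto the column span of `Φ_s`. -/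
def proj {n d : ℕ} (Φ : Matrix (Fin n) (Fin d) ℝ) (s : Finset (Fin d)) :
    Matrix (Fin n) (Fin n) ℝ :=
  cols Φ s * ((cols Φ s)ᵀ * cols Φ s)⁻¹ * (cols Φ s)ᵀ

/-- Least-squares residual `v^{⊥s} = (I - P{Φ_s}) v`. -/
def residVec {n d : ℕ} (Φ : Matrix (Fin n) (Fin d) ℝ) (s : Finset (Fin d)) (y : Fin n → ℝ) :
    Fin n → ℝ := y - (proj Φ s).mulVec y

/-- The `i`-th column of `Φ`. -/
def col {n d : ℕ} (Φ : Matrix (Fin n) (Fin d) ℝ) (i : Fin d) : Fin n → ℝ := fun k => Φ k i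

/-- `x` is a least-squares estimate of `y` supported on `s`:
it is supported on `s` and minimizes `‖y - Φ z‖₂` over all `z` supported on `s`. -/
def leastSq {n d : ℕ} (Φ : Matrix (Fin n) (Fin d) ℝ) (y : Fin n → ℝ) (s : Finset (Fin d))
    (x : Fin d → ℝ) : Prop :=
  (∀ i, i ∉ s → x i = 0) ∧
  ∀ z : Fin d → ℝ, (∀ i, i ∉ s → z i = 0) → nsq (y - Φ.mulVec x) ≤ nsq (y - Φ.mulVec z)

/-- The support of a vector, as a `Finset`. -/
def spt {d : ℕ} (x : Fin d → ℝ) : Finset (Fin d) :=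
  Finset.univ.filter fun i => x i ≠ 0

namespace Stmt4Aux

lemma nsq_eq_dot {k : Type*} [Fintype k] (v : k → ℝ) : nsq v = v ⬝ᵥ v := by
  simp [nsq, dotProduct, sq]

lemma nsq_nonneg {k : Type*} [Fintype k] (v : k → ℝ) : 0 ≤ nsq v :=
  Finset.sum_nonneg fun i _ => sq_nonneg _

lemma nsq_pos {k : Type*} [Fintype k] {v : k → ℝ} (h : v ≠ 0) : 0 < nsq v := by
  rcases (nsq_nonneg v).lt_or_eq with h' | h'
  · exact h'
  · exfalso; apply h; funext i
    have := (Finset.sum_eq_zero_iff_of_nonneg (fun i _ => sq_nonneg (v i))).1 h'.symm i (mem_univ i)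
    exact pow_eq_zero_iff (n := 2) (by norm_num) |>.1 this

variable {n d : ℕ} (Φ : Matrix (Fin n) (Fin d) ℝ)

lemma ripSet_nonempty (t : ℕ) : Set.Nonempty {δ : ℝ | 0 ≤ δ ∧ satRIP Φ t δ} := by
  classical
  set C : ℝ := ∑ j, ∑ i, Φ j i ^ 2 with hC
  have hC0 : 0 ≤ C := Finset.sum_nonneg fun j _ => Finset.sum_nonneg fun i _ => sq_nonneg _
  refine ⟨1 + C, by linarith, fun x _ => ?_⟩
  have hub : nsq (Φ.mulVec x) ≤ C * nsq x := by
    have : ∀ j, (Φ.mulVec x j) ^ 2 ≤ (∑ i, Φ j i ^ 2) * nsq x := fun j =>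
      Finset.sum_mul_sq_le_sq_mul_sq Finset.univ (fun i => Φ j i) x
    calc nsq (Φ.mulVec x) = ∑ j, (Φ.mulVec x j) ^ 2 := rfl
      _ ≤ ∑ j, (∑ i, Φ j i ^ 2) * nsq x := Finset.sum_le_sum fun j _ => this j
      _ = C * nsq x := by rw [← Finset.sum_mul]
  have hx0 := nsq_nonneg x
  have hΦ0 := nsq_nonneg (Φ.mulVec x)
  constructor <;> nlinarith

lemma ripConst_nonneg (t : ℕ) : 0 ≤ ripConst Φ t :=
  le_csInf (ripSet_nonempty Φ t) fun _ hδ => hδ.1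

lemma satRIP_ripConst (t : ℕ) : satRIP Φ t (ripConst Φ t) := by
  intro x hx
  rcases eq_or_ne (nsq x) 0 with h0 | h0
  · have hx0 : x = 0 := by
      by_contra h; exact (nsq_pos h).ne' h0
    subst hx0
    simp [h0, nsq, Matrix.mulVec_zero]
  · have hpos : 0 < nsq x := (nsq_nonneg x).lt_of_ne (Ne.symm h0)
    constructor
    · have h1 : (nsq x - nsq (Φ.mulVec x)) / nsq x ≤ ripConst Φ t := by
        apply le_csInf (ripSet_nonempty Φ t)
        intro δ hδ
        have := (hδ.2 x hx).1
        rw [div_le_iff₀ hpos]; linarith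
      have := (div_le_iff₀ hpos).1 h1
      linarith
    · have h1 : (nsq (Φ.mulVec x) - nsq x) / nsq x ≤ ripConst Φ t := by
        apply le_csInf (ripSet_nonempty Φ t)
        intro δ hδ
        have := (hδ.2 x hx).2
        rw [div_le_iff₀ hpos]; linarith
      have := (div_le_iff₀ hpos).1 h1
      linarith

lemma ripConst_mono {t₁ t₂ : ℕ} (h : t₁ ≤ t₂) : ripConst Φ t₁ ≤ ripConst Φ t₂ :=
  csInf_le_csInf ⟨0, fun _ hδ => hδ.1⟩ (ripSet_nonempty Φ t₂)
    (fun δ hδ => ⟨hδ.1, fun x hx => hδ.2 x (hx.trans h)⟩)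

/-- Extension by zero. -/
def embed {d : ℕ} (s : Finset (Fin d)) (v : {i // i ∈ s} → ℝ) : Fin d → ℝ :=
  fun i => if h : i ∈ s then v ⟨i, h⟩ else 0

lemma embed_coe {s : Finset (Fin d)} (v : {i // i ∈ s} → ℝ) (x : {i // i ∈ s}) :
    embed s v ↑x = v x := by simp [embed]

lemma embed_not_mem {s : Finset (Fin d)} (v : {i // i ∈ s} → ℝ) {i : Fin d} (h : i ∉ s) :
    embed s v i = 0 := by simp [embed, h]

lemma sparsity_embed (s : Finset (Fin d)) (v : {i // i ∈ s} → ℝ) :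
    sparsity (embed s v) ≤ s.card := by
  apply Finset.card_le_card
  intro i hi
  simp only [sparsity, mem_filter] at hi
  by_contra h
  exact hi.2 (embed_not_mem v h)

lemma nsq_embed (s : Finset (Fin d)) (v : {i // i ∈ s} → ℝ) :
    nsq (embed s v) = nsq v := by
  have h1 : nsq (embed s v) = ∑ i ∈ s, (embed s v i) ^ 2 := by
    rw [nsq]
    exact (Finset.sum_subset (Finset.subset_univ s)
      (fun i _ hi => by rw [embed_not_mem v hi]; ring)).symm
  rw [h1, ← Finset.sum_attach s (fun i => (embed s v i) ^ 2), nsq, Finset.univ_eq_attach]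
  exact Finset.sum_congr rfl fun x _ => by rw [embed_coe]

lemma mulVec_embed (s : Finset (Fin d)) (v : {i // i ∈ s} → ℝ) :
    Φ.mulVec (embed s v) = (cols Φ s).mulVec v := by
  funext j
  have h1 : Φ.mulVec (embed s v) j = ∑ i ∈ s, Φ j i * embed s v i := by
    simp only [Matrix.mulVec, dotProduct]
    exact (Finset.sum_subset (Finset.subset_univ s)
      (fun i _ hi => by rw [embed_not_mem v hi]; ring)).symm
  rw [h1, ← Finset.sum_attach s (fun i => Φ j i * embed s v i)]
  simp only [Matrix.mulVec, dotProduct, cols, Finset.univ_eq_attach, submatrix_apply, id]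
  exact Finset.sum_congr rfl fun x _ => by rw [embed_coe]


variable {n : ℕ}

lemma real_conjTranspose {m p : Type*} [Fintype m] [Fintype p] (A : Matrix m p ℝ) : Aᴴ = Aᵀ := by
  ext i j; simp [conjTranspose_apply]

/-- quadratic form of `Aᵀ * Q * A`. -/
lemma dot_AtQA {q : Type*} [Fintype q] (A : Matrix (Fin n) q ℝ) (Q : Matrix (Fin n) (Fin n) ℝ)
    (x : q → ℝ) :
    x ⬝ᵥ (Aᵀ * Q * A) *ᵥ x = (A *ᵥ x) ⬝ᵥ Q *ᵥ (A *ᵥ x) := by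
  rw [Matrix.mul_assoc, ← Matrix.mulVec_mulVec, dotProduct_mulVec, vecMul_transpose,
    ← Matrix.mulVec_mulVec]

open scoped MatrixOrder in
lemma inv_loewner {m : Type*} [Fintype m] [DecidableEq m] {M : Matrix m m ℝ} {c : ℝ}
    (hM : M.PosDef) (hc : 0 < c) (h : (c • (1 : Matrix m m ℝ) - M).PosSemidef) :
    (M⁻¹ - c⁻¹ • (1 : Matrix m m ℝ)).PosSemidef := by
  have hN : (M⁻¹).PosDef := hM.inv
  set R := CFC.sqrt (M⁻¹) with hRdef
  have hR : R.PosSemidef := Matrix.nonneg_iff_posSemidef.mp (CFC.sqrt_nonneg _)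
  have hRR : R * R = M⁻¹ := CFC.sqrt_mul_sqrt_self _ (Matrix.nonneg_iff_posSemidef.mpr hN.posSemidef)
  have hRH : Rᴴ = R := hR.isHermitian
  have hMdet : IsUnit M.det := hM.det_pos.ne'.isUnit
  have hRdet : IsUnit R.det := by
    have : R.det * R.det = (M⁻¹).det := by rw [← det_mul, hRR]
    have hNdet : (M⁻¹).det ≠ 0 := hN.det_pos.ne'
    refine isUnit_iff_ne_zero.2 fun h0 => hNdet ?_
    rw [← this, h0, mul_zero]
  have hRMR : R * M * R = 1 := by
    have h1 : R * (R * M) = 1 := by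
      rw [← Matrix.mul_assoc, hRR, Matrix.nonsing_inv_mul M hMdet]
    have h2 : R⁻¹ = R * M := Matrix.inv_eq_right_inv h1
    rw [show R * M = R⁻¹ from h2.symm, Matrix.nonsing_inv_mul R hRdet]
  have hT : (R * (c • (1 : Matrix m m ℝ) - M) * Rᴴ).PosSemidef := h.mul_mul_conjTranspose_same R
  rw [hRH] at hT
  have hTeq : R * (c • (1 : Matrix m m ℝ) - M) * R = c • M⁻¹ - 1 := by
    rw [Matrix.mul_sub, Matrix.sub_mul, Matrix.mul_smul, Matrix.mul_one, Matrix.smul_mul, hRR,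
      hRMR]
  rw [hTeq] at hT
  have heq : M⁻¹ - c⁻¹ • (1 : Matrix m m ℝ) = c⁻¹ • (c • M⁻¹ - 1) := by
    rw [smul_sub, smul_smul, inv_mul_cancel₀ hc.ne', one_smul]
  rw [heq]
  refine PosSemidef.of_dotProduct_mulVec_nonneg ?_ fun x => ?_
  · have h1 := hT.isHermitian
    unfold Matrix.IsHermitian at h1 ⊢
    rw [conjTranspose_smul, h1]
    congr 1
  · rw [smul_mulVec, dotProduct_smul, smul_eq_mul]
    exact mul_nonneg (by positivity) (hT.dotProduct_mulVec_nonneg x)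


end Stmt4Aux


namespace Stmt4Aux

variable {n d : ℕ} (Φ : Matrix (Fin n) (Fin d) ℝ)

lemma sparsity_le_support {x : Fin d → ℝ} {s : Finset (Fin d)}
    (h : ∀ i, i ∉ s → x i = 0) : sparsity x ≤ s.card := by
  apply Finset.card_le_card
  intro i hi
  simp only [sparsity, mem_filter] at hi
  by_contra hc
  exact hi.2 (h i hc)

lemma nsq_add_embed {s₁ s₂ : Finset (Fin d)} (hdisj : Disjoint s₁ s₂)
    (v : {i // i ∈ s₁} → ℝ) (w : {i // i ∈ s₂} → ℝ) :
    nsq (embed s₁ v + embed s₂ w) = nsq v + nsq w := by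
  have hcross : ∀ i, embed s₁ v i * embed s₂ w i = 0 := by
    intro i
    by_cases h : i ∈ s₁
    · rw [embed_not_mem w (Finset.disjoint_left.1 hdisj h), mul_zero]
    · rw [embed_not_mem v h, zero_mul]
  have h1 : nsq (embed s₁ v + embed s₂ w) = nsq (embed s₁ v) + nsq (embed s₂ w) := by
    simp only [nsq, Pi.add_apply, ← Finset.sum_add_distrib]
    exact Finset.sum_congr rfl fun i _ => by rw [add_sq, mul_assoc, hcross i]; ring
  rw [h1, nsq_embed, nsq_embed]

lemma sparsity_add_embed (s₁ s₂ : Finset (Fin d))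
    (v : {i // i ∈ s₁} → ℝ) (w : {i // i ∈ s₂} → ℝ) :
    sparsity (embed s₁ v + embed s₂ w) ≤ s₁.card + s₂.card := by
  refine le_trans (sparsity_le_support (s := s₁ ∪ s₂) ?_) (Finset.card_union_le s₁ s₂)
  intro i hi
  rw [Finset.mem_union] at hi
  push_neg at hi
  simp [Pi.add_apply, embed_not_mem v hi.1, embed_not_mem w hi.2]

lemma combo_lower {s₁ s₂ : Finset (Fin d)} (hdisj : Disjoint s₁ s₂)
    (v : {i // i ∈ s₁} → ℝ) (w : {i // i ∈ s₂} → ℝ) :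
    (1 - ripConst Φ (s₁.card + s₂.card)) * (nsq v + nsq w)
      ≤ nsq ((cols Φ s₁) *ᵥ v + (cols Φ s₂) *ᵥ w) := by
  have h := (satRIP_ripConst Φ (s₁.card + s₂.card) (embed s₁ v + embed s₂ w)
    (sparsity_add_embed s₁ s₂ v w)).1
  rwa [Matrix.mulVec_add, mulVec_embed, mulVec_embed, nsq_add_embed hdisj] at h

lemma cols_lower {s : Finset (Fin d)} {t : ℕ} (h : s.card ≤ t) (v : {i // i ∈ s} → ℝ) :
    (1 - ripConst Φ t) * nsq v ≤ nsq ((cols Φ s) *ᵥ v) := by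
  have h1 := (satRIP_ripConst Φ t (embed s v) ((sparsity_embed s v).trans h)).1
  rwa [mulVec_embed, nsq_embed] at h1

lemma cols_upper {s : Finset (Fin d)} {t : ℕ} (h : s.card ≤ t) (v : {i // i ∈ s} → ℝ) :
    nsq ((cols Φ s) *ᵥ v) ≤ (1 + ripConst Φ t) * nsq v := by
  have h1 := (satRIP_ripConst Φ t (embed s v) ((sparsity_embed s v).trans h)).2
  rwa [mulVec_embed, nsq_embed] at h1

/-- quadratic form of `Aᵀ * A` is the squared norm. -/
lemma dot_tmul {p q : Type*} [Fintype p] [Fintype q] (A : Matrix p q ℝ) (x : q → ℝ) :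
    x ⬝ᵥ (Aᵀ * A) *ᵥ x = nsq (A *ᵥ x) := by
  rw [← Matrix.mulVec_mulVec, dotProduct_mulVec, vecMul_transpose, nsq_eq_dot]

end Stmt4Aux

open Stmt4Aux in
theorem stmt4' {n d : ℕ} (Φ : Matrix (Fin n) (Fin d) ℝ) (s₁ s₂ : Finset (Fin d))
    (hdisj : Disjoint s₁ s₂)
    (hδ : ripConst Φ (s₁.card + s₂.card) ≤ 1 / 2) :
    IsUnit ((cols Φ s₁)ᵀ * (1 - proj Φ s₂) * cols Φ s₁) ∧
    (((cols Φ s₁)ᵀ * (1 - proj Φ s₂) * cols Φ s₁)⁻¹ -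
      (1 / (1 + ripConst Φ s₁.card)) •
        (1 : Matrix {i // i ∈ s₁} {i // i ∈ s₁} ℝ)).PosSemidef := by
  classical
  set δ := ripConst Φ (s₁.card + s₂.card) with hδdef
  have hδ0 : 0 ≤ δ := ripConst_nonneg Φ _
  set δ₁ := ripConst Φ s₁.card with hδ₁def
  have hδ₁0 : 0 ≤ δ₁ := ripConst_nonneg Φ _
  set A := cols Φ s₁ with hAdef
  set B := cols Φ s₂ with hBdef
  set G := Bᵀ * B with hGdef
  -- G is positive definite
  have hGpd : G.PosDef := by
    refine PosDef.of_dotProduct_mulVec_pos ?_ fun x hx => ?_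
    · show Gᴴ = G
      rw [real_conjTranspose, hGdef, Matrix.transpose_mul, Matrix.transpose_transpose]
    · have hsx : star x = x := by funext i; simp
      rw [hsx, hGdef, dot_tmul]
      have h1 : (1 - δ) * nsq x ≤ nsq (B *ᵥ x) :=
        cols_lower Φ (Nat.le_add_left _ _) x
      have h2 : 0 < nsq x := nsq_pos hx
      nlinarith
  have hGdet : IsUnit G.det := hGpd.det_pos.ne'.isUnit
  set P := proj Φ s₂ with hPdef
  have hPeq : P = B * G⁻¹ * Bᵀ := rfl
  have hGinvT : (G⁻¹)ᵀ = G⁻¹ := by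
    rw [Matrix.transpose_nonsing_inv]
    congr 1
    rw [hGdef, Matrix.transpose_mul, Matrix.transpose_transpose]
  have hPt : Pᵀ = P := by
    rw [hPeq, Matrix.transpose_mul, Matrix.transpose_mul, Matrix.transpose_transpose, hGinvT,
      Matrix.mul_assoc]
  have hPP : P * P = P := by
    rw [hPeq]
    calc B * G⁻¹ * Bᵀ * (B * G⁻¹ * Bᵀ) = B * G⁻¹ * (Bᵀ * B) * (G⁻¹ * Bᵀ) := by
          simp only [Matrix.mul_assoc]
      _ = B * (G⁻¹ * G) * (G⁻¹ * Bᵀ) := by rw [← hGdef]; simp only [Matrix.mul_assoc]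
      _ = B * G⁻¹ * Bᵀ := by
          rw [Matrix.nonsing_inv_mul G hGdet, Matrix.mul_one, Matrix.mul_assoc]
  set Q : Matrix (Fin n) (Fin n) ℝ := 1 - P with hQdef
  have hQt : Qᵀ = Q := by rw [hQdef, Matrix.transpose_sub, Matrix.transpose_one, hPt]
  have hQQ : Q * Q = Q := by
    rw [hQdef, Matrix.sub_mul, Matrix.one_mul, Matrix.mul_sub, Matrix.mul_one, hPP]
    abel
  have hQtQ : Qᵀ * Q = Q := by rw [hQt, hQQ]
  have hPtP : Pᵀ * P = P := by rw [hPt, hPP]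
  -- the quadratic form of M
  have key : ∀ v : {i // i ∈ s₁} → ℝ, v ⬝ᵥ (Aᵀ * Q * A) *ᵥ v = nsq (Q *ᵥ (A *ᵥ v)) := by
    intro v
    rw [dot_AtQA]
    conv_lhs => rw [← hQtQ, dot_tmul]
  -- lower bound on the quadratic form
  have lower : ∀ v : {i // i ∈ s₁} → ℝ, (1 / 2) * nsq v ≤ nsq (Q *ᵥ (A *ᵥ v)) := by
    intro v
    have hQu : Q *ᵥ (A *ᵥ v) = A *ᵥ v + B *ᵥ (-((G⁻¹ * Bᵀ * A) *ᵥ v)) := by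
      rw [hQdef, hPeq, Matrix.sub_mulVec, Matrix.one_mulVec, Matrix.mulVec_neg,
        Matrix.mulVec_mulVec, Matrix.mulVec_mulVec]
      simp only [Matrix.mul_assoc]
      abel
    have h1 := combo_lower Φ hdisj v (-((G⁻¹ * Bᵀ * A) *ᵥ v))
    rw [← hQu] at h1
    have h2 : 0 ≤ nsq (-((G⁻¹ * Bᵀ * A) *ᵥ v)) := nsq_nonneg _
    have h3 : 0 ≤ nsq v := nsq_nonneg _
    nlinarith
  -- upper bound on the quadratic form
  have upper : ∀ v : {i // i ∈ s₁} → ℝ, nsq (Q *ᵥ (A *ᵥ v)) ≤ (1 + δ₁) * nsq v := by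
    intro v
    have e1 : (A *ᵥ v) ⬝ᵥ Q *ᵥ (A *ᵥ v) = nsq (Q *ᵥ (A *ᵥ v)) := by
      conv_lhs => rw [← hQtQ, dot_tmul]
    have e2' : (A *ᵥ v) ⬝ᵥ P *ᵥ (A *ᵥ v) = nsq (P *ᵥ (A *ᵥ v)) := by
      conv_lhs => rw [← hPtP, dot_tmul]
    have e2 : (A *ᵥ v) ⬝ᵥ Q *ᵥ (A *ᵥ v)
        = nsq (A *ᵥ v) - nsq (P *ᵥ (A *ᵥ v)) := by
      rw [hQdef, Matrix.sub_mulVec, Matrix.one_mulVec, dotProduct_sub, e2', ← nsq_eq_dot]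
    have e3 : nsq (A *ᵥ v) ≤ (1 + δ₁) * nsq v := cols_upper Φ le_rfl v
    have e4 : 0 ≤ nsq (P *ᵥ (A *ᵥ v)) := nsq_nonneg _
    rw [← e1, e2]
    linarith
  -- M is positive definite
  have hMpd : (Aᵀ * Q * A).PosDef := by
    refine PosDef.of_dotProduct_mulVec_pos ?_ fun x hx => ?_
    · show (Aᵀ * Q * A)ᴴ = Aᵀ * Q * A
      rw [real_conjTranspose, Matrix.transpose_mul, Matrix.transpose_mul,
        Matrix.transpose_transpose, hQt, Matrix.mul_assoc]
    · have hsx : star x = x := by funext i; simp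
      rw [hsx, key x]
      have := lower x
      have := nsq_pos hx
      nlinarith
  refine ⟨hMpd.isUnit, ?_⟩
  have hc : 0 < 1 + δ₁ := by linarith
  have hpsd : ((1 + δ₁) • (1 : Matrix {i // i ∈ s₁} {i // i ∈ s₁} ℝ) - Aᵀ * Q * A).PosSemidef := by
    refine PosSemidef.of_dotProduct_mulVec_nonneg ?_ fun x => ?_
    · show ((1 + δ₁) • 1 - Aᵀ * Q * A)ᴴ = (1 + δ₁) • 1 - Aᵀ * Q * A
      rw [real_conjTranspose, Matrix.transpose_sub, Matrix.transpose_smul, Matrix.transpose_one,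
        Matrix.transpose_mul, Matrix.transpose_mul, Matrix.transpose_transpose, hQt,
        Matrix.mul_assoc]
    · have hsx : star x = x := by funext i; simp
      rw [hsx, Matrix.sub_mulVec, dotProduct_sub, smul_mulVec, Matrix.one_mulVec,
        dotProduct_smul, key x, smul_eq_mul, ← nsq_eq_dot]
      have := upper x
      linarith
  have := inv_loewner hMpd hc hpsd
  rwa [one_div] 


/-- for disjoint `s₁, s₂` with `δ_{k₁+k₂} ≤ 1/2`, the matrix
`M = Φ_{s₁}ᵀ (I − P{Φ_{s₂}}) Φ_{s₁}` is invertible and `M⁻¹ ⪰ (1/(1+δ_{k₁})) I`. -/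
theorem stmt4 {n d : ℕ} (Φ : Matrix (Fin n) (Fin d) ℝ) (s₁ s₂ : Finset (Fin d))
    (hdisj : Disjoint s₁ s₂)
    (hδ : ripConst Φ (s₁.card + s₂.card) ≤ 1 / 2) :
    IsUnit ((cols Φ s₁)ᵀ * (1 - proj Φ s₂) * cols Φ s₁) ∧
    (((cols Φ s₁)ᵀ * (1 - proj Φ s₂) * cols Φ s₁)⁻¹ -
      (1 / (1 + ripConst Φ s₁.card)) •
        (1 : Matrix {i // i ∈ s₁} {i // i ∈ s₁} ℝ)).PosSemidef := by
  exact stmt4' Φ s₁ s₂ hdisj hδ
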